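/- Let g₁, g₂ : ℝ^d → ℝ be continuously differentiable probability densities with disjoint supports: there exist disjoint open sets X₁, X₂ ⊆ ℝ^d such that for each i, g_i is strictly positive on X_i and g_i and ∇g_i vanish identically outside X_i. Let 0 < α_p < 1 and 0 < α_q < 1, and set p = α_p·g₁ + (1−α_p)·g₂ and q = α_q·g₁ + (1−α_q)·g₂. Then for any measurable kernel k : ℝ^d × ℝ^d → ℝ, the kernelized Stein discrepancy KSD(p||q) = ∫∫ p(x)·p(x')·⟨s_p(x) − s_q(x), s_p(x') − s_q(x')⟩·k(x, x') dx dx' equals 0 (the integrand vanishes identically on the support of p ⊗ p), even when α_p ≠ α_q so that p ≠ q. -/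

import Mathlib

open MeasureTheory

lemma hasGradientAt_log_comp {E : Type*} [NormedAddCommGroup E] [InnerProductSpace ℝ E] [CompleteSpace E]
    (f : E → ℝ) (g : E) (x : E) (hf : HasGradientAt f g x) (hfx : f x ≠ 0) :
    HasGradientAt (fun y => Real.log (f y)) ((f x)⁻¹ • g) x := by
  rw [hasGradientAt_iff_hasFDerivAt] at hf ⊢
  have h := (Real.hasDerivAt_log hfx).comp_hasFDerivAt x hf
  refine h.congr_fderiv ?_
  simp [_root_.map_smul]

lemma gradient_log_mix {d : ℕ} (g₁ g₂ : EuclideanSpace ℝ (Fin d) → ℝ) (c : ℝ) (hc : c ≠ 0)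
    (h1 : Differentiable ℝ g₁) (h2 : Differentiable ℝ g₂) (x : EuclideanSpace ℝ (Fin d))
    (hx1 : 0 < g₁ x) (hx2 : g₂ x = 0) (hgx2 : gradient g₂ x = 0) :
    gradient (fun y => Real.log (c * g₁ y + (1 - c) * g₂ y)) x
      = (g₁ x)⁻¹ • gradient g₁ x := by
  have hg1 : HasGradientAt g₁ (gradient g₁ x) x := (h1 x).hasGradientAt
  have hg2 : HasGradientAt g₂ (gradient g₂ x) x := (h2 x).hasGradientAt
  rw [hasGradientAt_iff_hasFDerivAt] at hg1 hg2
  have hmix : HasFDerivAt (fun y => c * g₁ y + (1 - c) * g₂ y)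
      (c • (InnerProductSpace.toDual ℝ _ (gradient g₁ x))
        + (1 - c) • (InnerProductSpace.toDual ℝ _ (gradient g₂ x))) x :=
    (hg1.const_mul c).add (hg2.const_mul (1 - c))
  have hmixg : HasGradientAt (fun y => c * g₁ y + (1 - c) * g₂ y)
      (c • gradient g₁ x + (1 - c) • gradient g₂ x) x := by
    rw [hasGradientAt_iff_hasFDerivAt]
    refine hmix.congr_fderiv ?_
    simp [map_add, _root_.map_smul]
  have hval : c * g₁ x + (1 - c) * g₂ x ≠ 0 := by
    rw [hx2]; simp [mul_ne_zero hc hx1.ne']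
  have := hasGradientAt_log_comp _ _ x hmixg hval
  rw [this.gradient, hgx2, hx2]
  rw [smul_zero, add_zero, mul_zero, add_zero, smul_smul]
  congr 1
  field_simp


/-- Appendix A.5 of the paper: for mixtures `p = α_p g₁ + (1−α_p) g₂` and
`q = α_q g₁ + (1−α_q) g₂` of two densities with disjoint supports, the kernelized Stein
discrepancy `∫∫ p(x) p(x') ⟨s_p(x) − s_q(x), s_p(x') − s_q(x')⟩ k(x,x') dx dx'` equals `0`
for any measurable kernel `k`, even when `α_p ≠ α_q` so that `p ≠ q`. -/
theorem ksd_blind_on_disjoint_supports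
    {d : ℕ} (g₁ g₂ : EuclideanSpace ℝ (Fin d) → ℝ)
    (X₁ X₂ : Set (EuclideanSpace ℝ (Fin d)))
    (hX₁ : IsOpen X₁) (hX₂ : IsOpen X₂) (hdisj : Disjoint X₁ X₂)
    (hg₁_diff : ContDiff ℝ 1 g₁) (hg₂_diff : ContDiff ℝ 1 g₂)
    (hg₁_nonneg : ∀ x, 0 ≤ g₁ x) (hg₂_nonneg : ∀ x, 0 ≤ g₂ x)
    (hg₁_int : Integrable g₁) (hg₂_int : Integrable g₂)
    (hg₁_one : ∫ x, g₁ x = 1) (hg₂_one : ∫ x, g₂ x = 1)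
    (hg₁_pos : ∀ x ∈ X₁, 0 < g₁ x) (hg₂_pos : ∀ x ∈ X₂, 0 < g₂ x)
    (hg₁_zero : ∀ x ∉ X₁, g₁ x = 0 ∧ gradient g₁ x = 0)
    (hg₂_zero : ∀ x ∉ X₂, g₂ x = 0 ∧ gradient g₂ x = 0)
    (αp αq : ℝ) (hαp₀ : 0 < αp) (hαp₁ : αp < 1) (hαq₀ : 0 < αq) (hαq₁ : αq < 1)
    (p q : EuclideanSpace ℝ (Fin d) → ℝ)
    (hp : p = fun x => αp * g₁ x + (1 - αp) * g₂ x)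
    (hq : q = fun x => αq * g₁ x + (1 - αq) * g₂ x)
    (k : EuclideanSpace ℝ (Fin d) → EuclideanSpace ℝ (Fin d) → ℝ)
    (hk : Measurable (Function.uncurry k)) :
    ∫ x, ∫ x', p x * p x' *
        (inner ℝ (gradient (fun y => Real.log (p y)) x
                  - gradient (fun y => Real.log (q y)) x)
               (gradient (fun y => Real.log (p y)) x'
                  - gradient (fun y => Real.log (q y)) x') : ℝ)
        * k x x' = 0 := by
  subst hp hq
  have h1d : Differentiable ℝ g₁ := hg₁_diff.differentiable one_ne_zero
  have h2d : Differentiable ℝ g₂ := hg₂_diff.differentiable one_ne_zero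
  set P : EuclideanSpace ℝ (Fin d) → ℝ := fun x => αp * g₁ x + (1 - αp) * g₂ x with hP
  set Q : EuclideanSpace ℝ (Fin d) → ℝ := fun x => αq * g₁ x + (1 - αq) * g₂ x with hQ
  have key : ∀ x, P x = 0 ∨
      gradient (fun y => Real.log (P y)) x - gradient (fun y => Real.log (Q y)) x = 0 := by
    intro x
    by_cases hx1 : x ∈ X₁
    · right
      have hx2 : x ∉ X₂ := fun h => Set.disjoint_left.mp hdisj hx1 h
      have e1 := gradient_log_mix g₁ g₂ αp hαp₀.ne' h1d h2d x (hg₁_pos x hx1)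
        (hg₂_zero x hx2).1 (hg₂_zero x hx2).2
      have e2 := gradient_log_mix g₁ g₂ αq hαq₀.ne' h1d h2d x (hg₁_pos x hx1)
        (hg₂_zero x hx2).1 (hg₂_zero x hx2).2
      rw [hP, hQ, e1, e2, sub_self]
    · by_cases hx2 : x ∈ X₂
      · right
        have hflip : ∀ c : ℝ, (fun y => c * g₁ y + (1 - c) * g₂ y)
            = fun y => (1 - c) * g₂ y + (1 - (1 - c)) * g₁ y := by
          intro c; funext y; ring
        have e1 := gradient_log_mix g₂ g₁ (1 - αp) (by linarith) h2d h1d x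
          (hg₂_pos x hx2) (hg₁_zero x hx1).1 (hg₁_zero x hx1).2
        have e2 := gradient_log_mix g₂ g₁ (1 - αq) (by linarith) h2d h1d x
          (hg₂_pos x hx2) (hg₁_zero x hx1).1 (hg₁_zero x hx1).2
        rw [hP, hQ, hflip αp, hflip αq, e1, e2, sub_self]
      · left
        simp [hP, (hg₁_zero x hx1).1, (hg₂_zero x hx2).1]
  have hzero : ∀ x x', P x * P x' *
      (inner ℝ (gradient (fun y => Real.log (P y)) x - gradient (fun y => Real.log (Q y)) x)
             (gradient (fun y => Real.log (P y)) x' - gradient (fun y => Real.log (Q y)) x') : ℝ)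
      * k x x' = 0 := by
    intro x x'
    rcases key x with h | h
    · rw [h]; ring
    · rw [h, inner_zero_left]; ring
  simp only [hzero, integral_zero]
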